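/- Let n, k be positive integers and let S = {S_1, ..., S_k} be a set system with S_i ⊆ [n] for all i ∈ [k]. Suppose that for all i ∈ [k] we have |S_i| ≤ i - 1. Then for any prime power q with q ≥ n + 1, there exists a k×n MDS matrix A over the finite field F_q such that A_{i,j} = 0 if and only if j ∈ S_i. -/

import Mathlib

open Polynomial

/-- Let `n, k` be positive integers and `S = {S_1, ..., S_k}` a set system with
`S_i ⊆ [n]` and `|S_i| ≤ i - 1` for all `i ∈ [k]` (zero-indexed: `|S i| ≤ i`).
Then over any finite field of size at least `n + 1` there exists a `k × n` MDS matrix `A`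
(every `k × k` submatrix is invertible) with `A i j = 0` iff `j ∈ S_i`. -/
theorem stmt_1 (n k : ℕ) (hn : 0 < n) (hk : 0 < k)
    (S : Fin k → Finset (Fin n))
    (hsize : ∀ i : Fin k, (S i).card ≤ i.val)
    (F : Type) [Field F] [Fintype F] (hcard : n + 1 ≤ Fintype.card F) :
    ∃ A : Matrix (Fin k) (Fin n) F,
      (∀ g : Fin k → Fin n, Function.Injective g → (A.submatrix id g).det ≠ 0) ∧
      (∀ (i : Fin k) (j : Fin n), A i j = 0 ↔ j ∈ S i) := by
  -- get n+1 distinct elements of F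
  obtain ⟨e⟩ : Nonempty (Fin (n + 1) ↪ F) := by
    apply Function.Embedding.nonempty_of_card_le
    simpa using hcard
  set x : Fin n → F := fun j => e j.castSucc with hx
  have hxinj : Function.Injective x := fun a b h => by
    have := e.injective h
    exact Fin.castSucc_injective n this
  set y : F := e (Fin.last n) with hy
  have hxy : ∀ j, x j ≠ y := by
    intro j h
    have := e.injective h
    exact (Fin.castSucc_lt_last j).ne this
  -- polynomials
  set P : Fin k → F[X] :=
    fun i => (X - C y) ^ (i.val - (S i).card) * ∏ s ∈ S i, (X - C (x s)) with hP
  have hmonic : ∀ i, (P i).Monic := fun i =>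
    ((monic_X_sub_C y).pow _).mul (monic_prod_of_monic _ _ fun s _ => monic_X_sub_C (x s))
  have hdeg : ∀ i, (P i).natDegree = i.val := by
    intro i
    rw [hP]
    rw [((monic_X_sub_C y).pow _).natDegree_mul
      (monic_prod_of_monic _ _ fun s _ => monic_X_sub_C (x s))]
    rw [natDegree_pow, natDegree_X_sub_C, mul_one]
    rw [natDegree_prod _ _ (fun s _ => X_sub_C_ne_zero (x s))]
    simp [Nat.sub_add_cancel (hsize i)]
  refine ⟨fun i j => (P i).eval (x j), ?_, ?_⟩
  · intro g hg
    have hdet := Matrix.det_eval_matrixOfPolynomials_eq_det_vandermonde (x ∘ g) P hdeg hmonic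
    have hvand : (Matrix.vandermonde (x ∘ g)).det ≠ 0 :=
      Matrix.det_vandermonde_ne_zero_iff.mpr (hxinj.comp hg)
    rw [hdet] at hvand
    intro h
    apply hvand
    rw [← Matrix.det_transpose]
    convert h using 2
    rfl
  · intro i j
    rw [hP]
    simp only [eval_mul, eval_pow, eval_sub, eval_X, eval_C, eval_prod]
    rw [mul_eq_zero, pow_eq_zero_iff', Finset.prod_eq_zero_iff]
    constructor
    · rintro (⟨h, -⟩ | ⟨s, hs, h⟩)
      · exact absurd (sub_eq_zero.mp h) (hxy j)
      · rwa [hxinj (sub_eq_zero.mp h)]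
    · intro hj
      exact Or.inr ⟨j, hj, sub_self _⟩
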